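/- Let l be a prime and let A(1,l), A(1,l^2), A(1,l^3), A(l,1) be complex numbers satisfying the Hecke relation A(1,l)·A(1,l^2) = A(1,l^3) + A(1,l)·A(l,1) − 1, together with A(l,1) = conj(A(1,l)) (dual form). Then max{|A(1,l)|, |A(1,l^2)|, |A(1,l^3)|} ≥ 1/3. -/

import Mathlib

/-- Hecke relation at a prime forces one of the first three eigenvalues to be ≥ 1/3
in absolute value. -/
theorem hecke_max_lower_bound (A1 A2 A3 Al : ℂ)
    (hrel : A1 * A2 = A3 + A1 * Al - 1)
    (hdual : Al = starRingEnd ℂ A1) :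
    (1 : ℝ) / 3 ≤ max (max ‖A1‖ ‖A2‖) ‖A3‖ := by
  by_contra h
  push_neg at h
  have h1 : ‖A1‖ < 1/3 := lt_of_le_of_lt (le_trans (le_max_left _ _) (le_max_left _ _)) h
  have h2 : ‖A2‖ < 1/3 := lt_of_le_of_lt (le_trans (le_max_right _ _) (le_max_left _ _)) h
  have h3 : ‖A3‖ < 1/3 := lt_of_le_of_lt (le_max_right _ _) h
  have key : (1:ℂ) = A3 + A1 * Al - A1 * A2 := by linear_combination hrel
  have habs : (1:ℝ) ≤ ‖A3‖ + ‖A1‖ * ‖A1‖ + ‖A1‖ * ‖A2‖ := by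
    calc (1:ℝ) = ‖(1:ℂ)‖ := by simp
    _ = ‖A3 + A1 * Al - A1 * A2‖ := by rw [← key]
    _ ≤ ‖A3 + A1 * Al‖ + ‖A1 * A2‖ := norm_sub_le _ _
    _ ≤ ‖A3‖ + ‖A1‖ * ‖A1‖ + ‖A1‖ * ‖A2‖ := by
          rw [norm_mul]
          have : ‖A3 + A1 * Al‖ ≤ ‖A3‖ + ‖A1‖ * ‖A1‖ := by
            calc ‖A3 + A1 * Al‖ ≤ ‖A3‖ + ‖A1 * Al‖ :=
                  norm_add_le _ _
            _ = ‖A3‖ + ‖A1‖ * ‖A1‖ := by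
                  rw [norm_mul, hdual, Complex.norm_conj]
          linarith
  have hpos : 0 ≤ ‖A1‖ := norm_nonneg _
  nlinarith
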